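/- Given a POVM A on a finite-dimensional Hilbert space H and a postprocessing B of A via a stochastic matrix ν (B_j = Σ_k ν_{kj} A_k), define C^j_k := B_j^{-1/2} ν_{kj} A_k B_j^{-1/2} + C'^j_k, where B_j^{-1/2} is the Moore–Penrose pseudoinverse of B_j^{1/2}, Π_j the projection onto supp(B_j), and (C'^j_k)_k is any family of positive semidefinite operators with Σ_k C'^j_k = I − Π_j. Then for every j, (C^j_k)_k is a POVM, and for every state ρ and every outcome k, Σ_j Tr[√(B_j) ρ √(B_j) C^j_k] = Tr[ρ A_k]. -/

import Mathlib

open scoped ComplexOrder Matrix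
set_option linter.unusedSectionVars false
set_option maxHeartbeats 1000000

/-- The positive semidefinite square root of a positive semidefinite matrix
(the definition `Matrix.PosSemidef.sqrt` of the older Mathlib, since removed). -/
noncomputable def Matrix.PosSemidef.sqrt {𝕜 : Type*} [RCLike 𝕜] {n : Type*} [Fintype n]
    [DecidableEq n] {A : Matrix n n 𝕜} (hA : A.PosSemidef) : Matrix n n 𝕜 :=
  hA.1.eigenvectorUnitary.1 * Matrix.diagonal (fun i => ((Real.sqrt (hA.1.eigenvalues i) : ℝ) : 𝕜)) *
  (star hA.1.eigenvectorUnitary : Matrix n n 𝕜)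

lemma Matrix.PosSemidef.posSemidef_sqrt {n : Type*} [Fintype n] [DecidableEq n]
    {A : Matrix n n ℂ} (hA : A.PosSemidef) : hA.sqrt.PosSemidef := by
  unfold Matrix.PosSemidef.sqrt
  exact (Matrix.PosSemidef.diagonal (fun i => by
    simp only [Pi.zero_apply]; exact Complex.zero_le_real.mpr (Real.sqrt_nonneg _))).mul_mul_conjTranspose_same _

lemma Matrix.PosSemidef.sqrt_mul_self {n : Type*} [Fintype n] [DecidableEq n]
    {A : Matrix n n ℂ} (hA : A.PosSemidef) : hA.sqrt * hA.sqrt = A := by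
  unfold Matrix.PosSemidef.sqrt
  set U := hA.1.eigenvectorUnitary
  have hU : (star U : Matrix n n ℂ) * U.1 = 1 := Unitary.coe_star_mul_self U
  have hD : Matrix.diagonal (fun i => ((Real.sqrt (hA.1.eigenvalues i) : ℝ) : ℂ)) *
      Matrix.diagonal (fun i => ((Real.sqrt (hA.1.eigenvalues i) : ℝ) : ℂ))
      = Matrix.diagonal (RCLike.ofReal ∘ hA.1.eigenvalues) := by
    rw [Matrix.diagonal_mul_diagonal]
    congr 1; funext i
    simp only [Function.comp_apply]
    rw [← Complex.ofReal_mul, Real.mul_self_sqrt (hA.eigenvalues_nonneg i)]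
    rfl
  conv_rhs => rw [hA.1.spectral_theorem, Unitary.conjStarAlgAut_apply]
  calc _ = U.1 * (Matrix.diagonal (fun i => ((Real.sqrt (hA.1.eigenvalues i) : ℝ) : ℂ)) *
      ((star U : Matrix n n ℂ) * U.1) *
      Matrix.diagonal (fun i => ((Real.sqrt (hA.1.eigenvalues i) : ℝ) : ℂ))) * (star U : Matrix n n ℂ) := by
        simp only [Matrix.mul_assoc]; rfl
    _ = _ := by rw [hU, Matrix.mul_one, hD]

section auxlemmas
variable {n : Type*} [Fintype n] [DecidableEq n]

lemma aux_diag_nonneg {M : Matrix n n ℂ} (hM : M.PosSemidef) (i : n) : 0 ≤ M i i := by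
  exact hM.diag_nonneg

lemma aux_trace_nonneg {M : Matrix n n ℂ} (hM : M.PosSemidef) : 0 ≤ M.trace :=
  Finset.sum_nonneg fun i _ => aux_diag_nonneg hM i

lemma aux_trace_zero {A : Matrix n n ℂ} (h : (Aᴴ * A).trace = 0) : A = 0 := by
  have h' : ∑ j, ∑ i, Complex.normSq (A i j) = 0 := by
    have e : (Aᴴ * A).trace = ((∑ j, ∑ i, Complex.normSq (A i j) : ℝ) : ℂ) := by
      simp only [Matrix.trace, Matrix.diag, Matrix.mul_apply, Matrix.conjTranspose_apply]
      push_cast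
      refine Finset.sum_congr rfl fun j _ => Finset.sum_congr rfl fun i _ => ?_
      rw [Complex.normSq_eq_conj_mul_self]
      rfl
    rw [e] at h
    exact_mod_cast h
  ext i j
  have hn : ∀ p ∈ (Finset.univ : Finset n), (0:ℝ) ≤ ∑ i, Complex.normSq (A i p) :=
    fun p _ => Finset.sum_nonneg fun i _ => Complex.normSq_nonneg _
  have h2 := (Finset.sum_eq_zero_iff_of_nonneg hn).mp h' j (Finset.mem_univ _)
  have h3 := (Finset.sum_eq_zero_iff_of_nonneg
    (fun i _ => Complex.normSq_nonneg (A i j))).mp h2 i (Finset.mem_univ _)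
  simpa using Complex.normSq_eq_zero.mp h3

lemma aux_smul {c : ℝ} (hc : 0 ≤ c) {M : Matrix n n ℂ} (hM : M.PosSemidef) :
    ((c : ℂ) • M).PosSemidef := by
  refine ⟨?_, fun x => ?_⟩
  · unfold Matrix.IsHermitian
    rw [Matrix.conjTranspose_smul, hM.1.eq, Complex.star_def, Complex.conj_ofReal]
  · exact (hM.smul (a := (c : ℂ)) (by exact_mod_cast hc)).2 x

lemma aux_sum_psd {ι : Type*} (s : Finset ι) (f : ι → Matrix n n ℂ)
    (hf : ∀ i ∈ s, (f i).PosSemidef) : (∑ i ∈ s, f i).PosSemidef := by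
  classical
  induction s using Finset.induction_on with
  | empty => simpa using Matrix.PosSemidef.zero
  | insert a s hx ih =>
    rw [Finset.sum_insert hx]
    exact (hf _ (Finset.mem_insert_self _ _)).add
      (ih fun i hi => hf i (Finset.mem_insert_of_mem hi))

lemma aux_supp {M T X : Matrix n n ℂ} (hM : M.PosSemidef) (hd : (T - M).PosSemidef)
    (hX : T * X = 0) : M * X = 0 := by
  have hRH : (hM.sqrt)ᴴ = hM.sqrt := hM.posSemidef_sqrt.isHermitian
  have hRR : hM.sqrt * hM.sqrt = M := hM.sqrt_mul_self
  have h1 : Xᴴ * (T - M) * X = -((hM.sqrt * X)ᴴ * (hM.sqrt * X)) := by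
    rw [Matrix.conjTranspose_mul, hRH, Matrix.mul_sub, Matrix.sub_mul,
      Matrix.mul_assoc Xᴴ T X, hX, Matrix.mul_zero, zero_sub]
    simp only [Matrix.mul_assoc]
    rw [← Matrix.mul_assoc hM.sqrt hM.sqrt X, hRR]
  have h2 := aux_trace_nonneg (hd.conjTranspose_mul_mul_same X)
  have h3 := aux_trace_nonneg (Matrix.posSemidef_conjTranspose_mul_self (hM.sqrt * X))
  rw [h1, Matrix.trace_neg] at h2
  have h4 : ((hM.sqrt * X)ᴴ * (hM.sqrt * X)).trace = 0 :=
    le_antisymm (neg_nonneg.mp h2) h3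
  have h5 : hM.sqrt * X = 0 := aux_trace_zero h4
  calc M * X = hM.sqrt * (hM.sqrt * X) := by rw [← Matrix.mul_assoc, hRR]
  _ = 0 := by rw [h5, Matrix.mul_zero]

lemma aux_pinv_unique {S P Q : Matrix n n ℂ}
    (hP1 : S * P * S = S) (hP2 : P * S * P = P) (hP3 : (S*P)ᴴ = S*P) (hP4 : (P*S)ᴴ = P*S)
    (hQ1 : S * Q * S = S) (hQ2 : Q * S * Q = Q) (hQ3 : (S*Q)ᴴ = S*Q) (hQ4 : (Q*S)ᴴ = Q*S) :
    P = Q := by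
  have t1 : Q * S * (P * S) = Q * S := by
    rw [Matrix.mul_assoc Q S (P*S), ← Matrix.mul_assoc S P S, hP1]
  have e1 : P * S = Q * S := by
    calc P * S = (P * S) * (Q * S) := by
          conv_lhs => rw [← hQ1]
          simp only [Matrix.mul_assoc]
      _ = ((Q * S) * (P * S))ᴴ := by rw [Matrix.conjTranspose_mul, hP4, hQ4]
      _ = Q * S := by rw [t1, hQ4]
  have t2 : (S * P) * (S * Q) = S * Q := by
    rw [← Matrix.mul_assoc (S*P) S Q, hP1]
  have e2 : S * P = S * Q := by
    calc S * P = (S * Q) * (S * P) := by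
          conv_lhs => rw [← hQ1]
          simp only [Matrix.mul_assoc]
      _ = ((S * P) * (S * Q))ᴴ := by rw [Matrix.conjTranspose_mul, hP3, hQ3]
      _ = S * Q := by rw [t2, hQ3]
  calc P = P * S * P := hP2.symm
    _ = Q * S * P := by rw [e1]
    _ = Q * (S * Q) := by rw [Matrix.mul_assoc, e2]
    _ = Q := by rw [← Matrix.mul_assoc, hQ2]

lemma aux_pinv_herm {S P : Matrix n n ℂ} (hSH : Sᴴ = S)
    (hP1 : S * P * S = S) (hP2 : P * S * P = P) (hP3 : (S*P)ᴴ = S*P) (hP4 : (P*S)ᴴ = P*S) :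
    Pᴴ = P := by
  have hQ1 : S * Pᴴ * S = S := by
    have := congrArg Matrix.conjTranspose hP1
    simpa [Matrix.conjTranspose_mul, hSH, Matrix.mul_assoc] using this
  have hQ2 : Pᴴ * S * Pᴴ = Pᴴ := by
    have := congrArg Matrix.conjTranspose hP2
    simpa [Matrix.conjTranspose_mul, hSH, Matrix.mul_assoc] using this
  have hc : S * Pᴴ = P * S := by
    have := hP4
    rw [Matrix.conjTranspose_mul, hSH] at this
    exact this
  have hc' : Pᴴ * S = S * P := by
    have := hP3
    rw [Matrix.conjTranspose_mul, hSH] at this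
    exact this
  have hQ3 : (S * Pᴴ)ᴴ = S * Pᴴ := by rw [hc, hP4, ← hc]
  have hQ4 : (Pᴴ * S)ᴴ = Pᴴ * S := by rw [hc', hP3, ← hc']
  exact (aux_pinv_unique hP1 hP2 hP3 hP4 hQ1 hQ2 hQ3 hQ4).symm

end auxlemmas

/-- Let `A` be a POVM, `B j = ∑ k, ν k j • A k` a postprocessing via a
stochastic matrix `ν`, `Pinv j` the Moore–Penrose pseudoinverse of `√(B j)`
(characterized by the four Penrose conditions), `Π j = Pinv j * √(B j)` the projection
onto `supp (B j)`, and `(C' j k)_k` any family of positive semidefinite operators with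
`∑ k, C' j k = 1 - Π j`.  Define `C j k := Pinv j * (ν k j • A k) * Pinv j + C' j k`.
Then each `(C j ·)` is a POVM, and for every state `ρ` and outcome `k`,
`∑ j, Tr[√(B j) ρ √(B j) * C j k] = Tr[ρ * A k]`. -/
theorem stmt_11 {n ΩA ΩB : Type*} [Fintype n] [DecidableEq n] [Fintype ΩA] [Fintype ΩB]
    (A : ΩA → Matrix n n ℂ) (hApos : ∀ k, (A k).PosSemidef) (hAsum : ∑ k, A k = 1)
    (ν : ΩA → ΩB → ℝ) (hν : ∀ k j, 0 ≤ ν k j) (hνrow : ∀ k, ∑ j, ν k j = 1)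
    (B : ΩB → Matrix n n ℂ) (hB : ∀ j, B j = ∑ k, (ν k j : ℂ) • A k)
    (hBpos : ∀ j, (B j).PosSemidef)
    (Pinv : ΩB → Matrix n n ℂ)
    (hP1 : ∀ j, (hBpos j).sqrt * Pinv j * (hBpos j).sqrt = (hBpos j).sqrt)
    (hP2 : ∀ j, Pinv j * (hBpos j).sqrt * Pinv j = Pinv j)
    (hP3 : ∀ j, ((hBpos j).sqrt * Pinv j)ᴴ = (hBpos j).sqrt * Pinv j)
    (hP4 : ∀ j, (Pinv j * (hBpos j).sqrt)ᴴ = Pinv j * (hBpos j).sqrt)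
    (C' : ΩB → ΩA → Matrix n n ℂ) (hC'pos : ∀ j k, (C' j k).PosSemidef)
    (hC'sum : ∀ j, ∑ k, C' j k = 1 - Pinv j * (hBpos j).sqrt)
    (C : ΩB → ΩA → Matrix n n ℂ)
    (hC : ∀ j k, C j k = Pinv j * ((ν k j : ℂ) • A k) * Pinv j + C' j k) :
    (∀ j, (∀ k, (C j k).PosSemidef) ∧ ∑ k, C j k = 1) ∧
    (∀ ρ : Matrix n n ℂ, ρ.PosSemidef → ρ.trace = 1 → ∀ k,
      ∑ j, ((hBpos j).sqrt * ρ * (hBpos j).sqrt * C j k).trace = (ρ * A k).trace) := by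
  classical
  have hSH : ∀ j, ((hBpos j).sqrt)ᴴ = (hBpos j).sqrt :=
    fun j => (hBpos j).posSemidef_sqrt.isHermitian
  have hSS : ∀ j, (hBpos j).sqrt * (hBpos j).sqrt = B j := fun j => (hBpos j).sqrt_mul_self
  have hPH : ∀ j, (Pinv j)ᴴ = Pinv j :=
    fun j => aux_pinv_herm (hSH j) (hP1 j) (hP2 j) (hP3 j) (hP4 j)
  -- commutation : Pinv * sqrt = sqrt * Pinv
  have hcomm : ∀ j, Pinv j * (hBpos j).sqrt = (hBpos j).sqrt * Pinv j := by
    intro j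
    have := hP3 j
    rw [Matrix.conjTranspose_mul, hPH j, hSH j] at this
    exact this
  -- the projection Q j = Pinv j * sqrt (B j)
  set Q : ΩB → Matrix n n ℂ := fun j => Pinv j * (hBpos j).sqrt with hQdef
  have hQH : ∀ j, (Q j)ᴴ = Q j := fun j => hP4 j
  have hSQS : ∀ j, (hBpos j).sqrt * Q j = (hBpos j).sqrt := by
    intro j
    show (hBpos j).sqrt * (Pinv j * (hBpos j).sqrt) = (hBpos j).sqrt
    rw [← Matrix.mul_assoc, hP1 j]
  have hQ2 : ∀ j, Q j * Q j = Q j := by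
    intro j
    show (Pinv j * (hBpos j).sqrt) * (Pinv j * (hBpos j).sqrt) = Pinv j * (hBpos j).sqrt
    rw [Matrix.mul_assoc (Pinv j) ((hBpos j).sqrt) (Pinv j * (hBpos j).sqrt),
      ← Matrix.mul_assoc ((hBpos j).sqrt) (Pinv j) ((hBpos j).sqrt), hP1 j]
  have hBQ : ∀ j, B j * Q j = B j := by
    intro j
    rw [← hSS j]
    show (hBpos j).sqrt * (hBpos j).sqrt * Q j = _
    rw [Matrix.mul_assoc, hSQS j]
  have hB1Q : ∀ j, B j * (1 - Q j) = 0 := by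
    intro j; rw [Matrix.mul_sub, Matrix.mul_one, hBQ j, sub_self]
  have h1QQ : ∀ j, (1 - Q j) * Q j = 0 := by
    intro j; rw [Matrix.sub_mul, Matrix.one_mul, hQ2 j, sub_self]
  -- positivity of the (1 - Q j) pieces minus one term, and of B minus one term
  have hC'le : ∀ j k, ((1 - Q j) - C' j k).PosSemidef := by
    intro j k
    have : (1 - Q j) - C' j k = ∑ k' ∈ Finset.univ.erase k, C' j k' := by
      rw [← hC'sum j, ← Finset.add_sum_erase _ _ (Finset.mem_univ k), add_sub_cancel_left]
    rw [this]
    exact aux_sum_psd _ _ fun i _ => hC'pos j i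
  have hBle : ∀ j k, (B j - (ν k j : ℂ) • A k).PosSemidef := by
    intro j k
    have : B j - (ν k j : ℂ) • A k = ∑ k' ∈ Finset.univ.erase k, (ν k' j : ℂ) • A k' := by
      rw [hB j, ← Finset.add_sum_erase _ _ (Finset.mem_univ k), add_sub_cancel_left]
    rw [this]
    exact aux_sum_psd _ _ fun i _ => aux_smul (hν i j) (hApos i)
  -- C' is annihilated by Q
  have hC'Q : ∀ j k, C' j k * Q j = 0 := by
    intro j k
    exact aux_supp (hC'pos j k) (hC'le j k) (h1QQ j)
  have hQC' : ∀ j k, Q j * C' j k = 0 := by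
    intro j k
    have := congrArg Matrix.conjTranspose (hC'Q j k)
    rwa [Matrix.conjTranspose_mul, hQH j, (hC'pos j k).isHermitian.eq,
      Matrix.conjTranspose_zero] at this
  have hSC' : ∀ j k, (hBpos j).sqrt * C' j k = 0 := by
    intro j k
    rw [← hSQS j, Matrix.mul_assoc, hQC' j k, Matrix.mul_zero]
  -- ν k j • A k is fixed by Q on both sides
  have hMQ : ∀ j k, ((ν k j : ℂ) • A k) * Q j = (ν k j : ℂ) • A k := by
    intro j k
    have h0 : ((ν k j : ℂ) • A k) * (1 - Q j) = 0 :=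
      aux_supp (aux_smul (hν k j) (hApos k)) (hBle j k) (hB1Q j)
    rw [Matrix.mul_sub, Matrix.mul_one, sub_eq_zero] at h0
    exact h0.symm
  have hQM : ∀ j k, Q j * ((ν k j : ℂ) • A k) = (ν k j : ℂ) • A k := by
    intro j k
    have := congrArg Matrix.conjTranspose (hMQ j k)
    rwa [Matrix.conjTranspose_mul, hQH j, (aux_smul (hν k j) (hApos k)).isHermitian.eq] at this
  constructor
  · -- part 1 : each C j is a POVM
    intro j
    constructor
    · intro k
      rw [hC j k]
      have hpsd := (aux_smul (hν k j) (hApos k)).mul_mul_conjTranspose_same (Pinv j)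
      rw [hPH j] at hpsd
      exact hpsd.add (hC'pos j k)
    · have hsum : ∑ k, C j k
          = Pinv j * B j * Pinv j + (1 - Q j) := by
        simp only [hC]
        rw [Finset.sum_add_distrib, hC'sum j]
        congr 1
        rw [hB j, Matrix.mul_sum, Matrix.sum_mul]
      rw [hsum]
      have : Pinv j * B j * Pinv j = Q j := by
        rw [← hSS j, ← Matrix.mul_assoc, Matrix.mul_assoc (Pinv j * (hBpos j).sqrt)]
        show Q j * ((hBpos j).sqrt * Pinv j) = Q j
        rw [← hcomm j]
        show Q j * Q j = Q j
        exact hQ2 j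
      rw [this, add_sub_cancel]
  · -- part 2 : traces
    intro ρ hρ hρtr k
    have hterm : ∀ j, ((hBpos j).sqrt * ρ * (hBpos j).sqrt * C j k).trace
        = (ν k j : ℂ) * (ρ * A k).trace := by
      intro j
      rw [hC j k, Matrix.mul_add, Matrix.trace_add]
      have hzero : ((hBpos j).sqrt * ρ * (hBpos j).sqrt * C' j k).trace = 0 := by
        rw [Matrix.mul_assoc ((hBpos j).sqrt * ρ) _ _, hSC' j k, Matrix.mul_zero,
          Matrix.trace_zero]
      rw [hzero, add_zero]
      -- key sandwich identity
      have hsand : (hBpos j).sqrt * (Pinv j * ((ν k j : ℂ) • A k) * Pinv j) * (hBpos j).sqrt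
          = (ν k j : ℂ) • A k := by
        calc (hBpos j).sqrt * (Pinv j * ((ν k j : ℂ) • A k) * Pinv j) * (hBpos j).sqrt
            = ((hBpos j).sqrt * Pinv j) * ((ν k j : ℂ) • A k) * (Pinv j * (hBpos j).sqrt) := by
              simp only [Matrix.mul_assoc]
          _ = Q j * ((ν k j : ℂ) • A k) * Q j := by rw [← hcomm j]
          _ = (ν k j : ℂ) • A k := by rw [hQM j k, hMQ j k]
      calc ((hBpos j).sqrt * ρ * (hBpos j).sqrt
              * (Pinv j * ((ν k j : ℂ) • A k) * Pinv j)).trace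
          = (((hBpos j).sqrt * ρ) * ((hBpos j).sqrt
              * (Pinv j * ((ν k j : ℂ) • A k) * Pinv j))).trace := by
            rw [Matrix.mul_assoc]
        _ = (((hBpos j).sqrt * (Pinv j * ((ν k j : ℂ) • A k) * Pinv j))
              * ((hBpos j).sqrt * ρ)).trace := Matrix.trace_mul_comm _ _
        _ = ((((hBpos j).sqrt * (Pinv j * ((ν k j : ℂ) • A k) * Pinv j)) * (hBpos j).sqrt)
              * ρ).trace := by simp only [Matrix.mul_assoc]
        _ = (((ν k j : ℂ) • A k) * ρ).trace := by rw [hsand]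
        _ = (ρ * ((ν k j : ℂ) • A k)).trace := Matrix.trace_mul_comm _ _
        _ = (ν k j : ℂ) * (ρ * A k).trace := by
            rw [Matrix.mul_smul, Matrix.trace_smul, smul_eq_mul]
    rw [Finset.sum_congr rfl fun j _ => hterm j, ← Finset.sum_mul]
    have : ∑ j, (ν k j : ℂ) = 1 := by
      rw [← Complex.ofReal_sum, hνrow k, Complex.ofReal_one]
    rw [this, one_mul]
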